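/- arXiv:math/0502140 — 2 statements merged into one kernel-verified Lean document; each statement's English description precedes it below -/
import Mathlib

section
/- For every x ∈ 𝔲_{14} and every y ∈ 𝔲, the element x ∧ y of Λ²𝔲 lies in Im(d3). -/
set_option maxHeartbeats 1000000
set_option synthInstance.maxHeartbeats 200000


/-- Index type with four consecutive blocks of sizes `n 0, n 1, n 2, n 3`
(corresponding to the partition `I1 ⊔ I2 ⊔ I3 ⊔ I4` of `{1, …, N}`). -/
abbrev BIdx (n : Fin 4 → ℕ) := Σ a : Fin 4, Fin (n a)

attribute [local instance 100] LieRing.ofAssociativeRing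

/-- The Lie algebra `𝔲` of strictly block upper triangular matrices. -/
def uLie (n : Fin 4 → ℕ) (K : Type*) [Field K] :
    LieSubalgebra K (Matrix (BIdx n) (BIdx n) K) where
  carrier := {M | ∀ (a b : Fin 4) (i : Fin (n a)) (j : Fin (n b)), b ≤ a → M ⟨a, i⟩ ⟨b, j⟩ = 0}
  add_mem' := by
    intro x y hx hy a b i j h
    simp [Matrix.add_apply, hx a b i j h, hy a b i j h]
  zero_mem' := by intro a b i j h; simp
  smul_mem' := by
    intro c x hx a b i j h
    simp [Matrix.smul_apply, hx a b i j h]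
  lie_mem' := by
    intro x y hx hy a b i j h
    have key : ∀ u v : Matrix (BIdx n) (BIdx n) K,
        (∀ (a b : Fin 4) (i : Fin (n a)) (j : Fin (n b)), b ≤ a → u ⟨a, i⟩ ⟨b, j⟩ = 0) →
        (∀ (a b : Fin 4) (i : Fin (n a)) (j : Fin (n b)), b ≤ a → v ⟨a, i⟩ ⟨b, j⟩ = 0) →
        (u * v) ⟨a, i⟩ ⟨b, j⟩ = 0 := by
      intro u v hu hv
      rw [Matrix.mul_apply]
      apply Finset.sum_eq_zero
      rintro ⟨c, kk⟩ -
      by_cases hc : c ≤ a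
      · rw [hu a c i kk hc, zero_mul]
      · rw [hv c b kk j (h.trans (le_of_not_ge hc)), mul_zero]
    rw [Ring.lie_def, Matrix.sub_apply, key x y hx hy, key y x hy hx, sub_zero]

/-- The type of elements of `𝔲`. -/
abbrev UU (n : Fin 4 → ℕ) (K : Type*) [Field K] := ↥(uLie n K)

/-- `x ∧ y`, as an element of the second exterior power `⋀[K]^2 𝔲`. -/
noncomputable def wedge {n : Fin 4 → ℕ} {K : Type*} [Field K] (x y : UU n K) :
    ↥(⋀[K]^2 (UU n K)) :=
  ⟨ExteriorAlgebra.ιMulti K 2 ![x, y], ExteriorAlgebra.ιMulti_range K 2 ⟨![x, y], rfl⟩⟩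

/-- `x` is supported on the `(a, b)` block. -/
def inBlock {n : Fin 4 → ℕ} {K : Type*} [Field K] (a b : Fin 4) (x : UU n K) : Prop :=
  ∀ (c d : Fin 4) (i : Fin (n c)) (j : Fin (n d)), ¬(c = a ∧ d = b) →
    (x : Matrix (BIdx n) (BIdx n) K) ⟨c, i⟩ ⟨d, j⟩ = 0

/-- The image of the Chevalley–Eilenberg differential `d3 : Λ³𝔲 → Λ²𝔲`: the span of all
`z ∧ [x,y] + y ∧ [z,x] + x ∧ [y,z]`. -/
noncomputable def Imd3 (n : Fin 4 → ℕ) (K : Type*) [Field K] :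
    Submodule K ↥(⋀[K]^2 (UU n K)) :=
  Submodule.span K
    {w | ∃ x y z : UU n K, w = wedge z ⁅x, y⁆ + wedge y ⁅z, x⁆ + wedge x ⁅y, z⁆}

section Aux

variable {n : Fin 4 → ℕ} {K : Type*} [Field K]

private lemma upd0 (x y z : UU n K) : Function.update ![x, y] 0 z = ![z, y] := by
  ext i; fin_cases i <;> simp

private lemma upd1 (x y z : UU n K) : Function.update ![x, y] 1 z = ![x, z] := by
  ext i; fin_cases i <;> simp

private lemma wedge_addL (x x' y : UU n K) :
    wedge (x + x') y = wedge x y + wedge x' y := by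
  apply Subtype.ext
  have h := (ExteriorAlgebra.ιMulti K 2 (M := UU n K)).map_update_add ![x, y] 0 x x'
  rw [upd0, upd0, upd0] at h
  simpa [wedge] using h

private lemma wedge_smulL (c : K) (x y : UU n K) :
    wedge (c • x) y = c • wedge x y := by
  apply Subtype.ext
  have h := (ExteriorAlgebra.ιMulti K 2 (M := UU n K)).map_update_smul ![x, y] 0 c x
  rw [upd0, upd0] at h
  simpa [wedge] using h

private lemma wedge_addR (x y y' : UU n K) :
    wedge x (y + y') = wedge x y + wedge x y' := by
  apply Subtype.ext
  have h := (ExteriorAlgebra.ιMulti K 2 (M := UU n K)).map_update_add ![x, y] 1 y y'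
  rw [upd1, upd1, upd1] at h
  simpa [wedge] using h

private lemma wedge_smulR (c : K) (x y : UU n K) :
    wedge x (c • y) = c • wedge x y := by
  apply Subtype.ext
  have h := (ExteriorAlgebra.ιMulti K 2 (M := UU n K)).map_update_smul ![x, y] 1 c y
  rw [upd1, upd1] at h
  simpa [wedge] using h

private lemma wedge_zeroR (x : UU n K) : wedge x 0 = 0 := by
  apply Subtype.ext
  have h := (ExteriorAlgebra.ιMulti K 2 (M := UU n K)).map_coord_zero
      (m := ![x, 0]) 1 (by simp)
  simpa [wedge] using h

private lemma wedge_anti (x y : UU n K) : wedge y x = - wedge x y := by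
  apply Subtype.ext
  have h := (ExteriorAlgebra.ιMulti K 2 (M := UU n K)).map_swap ![x, y]
      (by decide : (0 : Fin 2) ≠ 1)
  have e : ![x, y] ∘ Equiv.swap (0 : Fin 2) 1 = ![y, x] := by
    ext i; fin_cases i <;> simp [Equiv.swap_apply_left, Equiv.swap_apply_right]
  rw [e] at h
  simpa [wedge] using h

/-- The bilinear wedge map. -/
private noncomputable def wedgeLin : UU n K →ₗ[K] UU n K →ₗ[K] ↥(⋀[K]^2 (UU n K)) :=
  LinearMap.mk₂ K wedge wedge_addL wedge_smulL wedge_addR wedge_smulR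

private lemma wedgeLin_apply (x y : UU n K) : wedgeLin x y = wedge x y := rfl

/-- Elementary matrix in an admissible block, as an element of `𝔲`. -/
private def EE (r s : BIdx n) (h : r.1 < s.1) : UU n K :=
  ⟨Matrix.single r s 1, by
    intro a b i j hba
    apply Matrix.single_apply_of_ne
    rintro ⟨rfl, rfl⟩
    exact absurd h (not_lt.mpr hba)⟩

private lemma coe_EE (r s : BIdx n) (h : r.1 < s.1) :
    ((EE r s h : UU n K) : Matrix (BIdx n) (BIdx n) K) = Matrix.single r s 1 := rfl

private lemma gen_mem (x y z : UU n K) :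
    wedge z ⁅x, y⁆ + wedge y ⁅z, x⁆ + wedge x ⁅y, z⁆ ∈ Imd3 n K :=
  Submodule.subset_span ⟨x, y, z, rfl⟩

private lemma wedge_bracket_mem (u v z : UU n K) (hzu : ⁅z, u⁆ = 0) (hvz : ⁅v, z⁆ = 0) :
    wedge z ⁅u, v⁆ ∈ Imd3 n K := by
  have h := gen_mem u v z
  rwa [hzu, hvz, wedge_zeroR, wedge_zeroR, add_zero, add_zero] at h

private lemma bracket_EE_eq (r m s : BIdx n) (h1 : r.1 < m.1) (h2 : m.1 < s.1) :
    ⁅(EE r m h1 : UU n K), EE m s h2⁆ = (EE r s (h1.trans h2) : UU n K) := by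
  apply Subtype.ext
  rw [LieSubalgebra.coe_bracket, Ring.lie_def, coe_EE, coe_EE, coe_EE,
    Matrix.single_mul_single_same,
    Matrix.single_mul_single_of_ne
      (h := fun h => (h1.trans h2).ne' (congrArg Sigma.fst h)),
    one_mul, sub_zero]

private lemma bracket_EE_zero (a b c d : BIdx n) (h1 : a.1 < b.1) (h2 : c.1 < d.1)
    (hbc : b ≠ c) (hda : d ≠ a) : ⁅(EE a b h1 : UU n K), EE c d h2⁆ = (0 : UU n K) := by
  apply Subtype.ext
  rw [LieSubalgebra.coe_bracket, Ring.lie_def, coe_EE, coe_EE,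
    Matrix.single_mul_single_of_ne (h := hbc), Matrix.single_mul_single_of_ne (h := hda),
    sub_zero, ZeroMemClass.coe_zero]

private lemma exists_avoid {m : ℕ} (hm : 3 ≤ m) {α : Type*} (f : Fin m → α)
    (hf : Function.Injective f) (a b : α) : ∃ p, f p ≠ a ∧ f p ≠ b := by
  by_contra hcon
  push_neg at hcon
  have key : ∀ p, f p = a ∨ f p = b := fun p => or_iff_not_imp_left.mpr (hcon p)
  have h0 := key ⟨0, by omega⟩
  have h1 := key ⟨1, by omega⟩
  have h2 := key ⟨2, by omega⟩
  have e01 : (⟨0, by omega⟩ : Fin m) ≠ ⟨1, by omega⟩ := by simp [Fin.ext_iff]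
  have e02 : (⟨0, by omega⟩ : Fin m) ≠ ⟨2, by omega⟩ := by simp [Fin.ext_iff]
  have e12 : (⟨1, by omega⟩ : Fin m) ≠ ⟨2, by omega⟩ := by simp [Fin.ext_iff]
  rcases h0 with h0 | h0 <;> rcases h1 with h1 | h1 <;> rcases h2 with h2 | h2
  · exact e01 (hf (h0.trans h1.symm))
  · exact e01 (hf (h0.trans h1.symm))
  · exact e02 (hf (h0.trans h2.symm))
  · exact e12 (hf (h1.trans h2.symm))
  · exact e12 (hf (h1.trans h2.symm))
  · exact e02 (hf (h0.trans h2.symm))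
  · exact e01 (hf (h0.trans h1.symm))
  · exact e01 (hf (h0.trans h1.symm))

private lemma core (hn1 : 3 ≤ n 1) (r s r' s' : BIdx n) (hr : r.1 = 0) (hs : s.1 = 3)
    (hrs : r.1 < s.1) (h' : r'.1 < s'.1) :
    wedge (EE r s hrs) (EE r' s' h' : UU n K) ∈ Imd3 n K := by
  obtain ⟨p, hp1, hp2⟩ := exists_avoid hn1 (fun p : Fin (n 1) => (⟨1, p⟩ : BIdx n))
      (fun p q h => by simpa using h) r' s'
  set m : BIdx n := ⟨1, p⟩ with hm
  have h1 : r.1 < m.1 := by rw [hr]; exact (by decide : (0 : Fin 4) < 1)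
  have h2 : m.1 < s.1 := by rw [hs]; exact (by decide : (1 : Fin 4) < 3)
  have hs'r : s' ≠ r := by
    intro h
    have e1 := congrArg (fun t : BIdx n => (t.1 : ℕ)) h
    have e2 := congrArg Fin.val hr
    have e3 := Fin.lt_def.mp h'
    omega
  have hsr' : s ≠ r' := by
    intro h
    have e1 := congrArg (fun t : BIdx n => (t.1 : ℕ)) h
    have e2 := congrArg Fin.val hs
    have e3 := Fin.lt_def.mp h'
    have e4 := s'.1.isLt
    omega
  have hz1 : ⁅(EE r' s' h' : UU n K), EE r m h1⁆ = 0 :=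
    bracket_EE_zero r' s' r m h' h1 hs'r hp1
  have hz2 : ⁅(EE m s h2 : UU n K), EE r' s' h'⁆ = 0 :=
    bracket_EE_zero m s r' s' h2 h' hsr' (Ne.symm hp2)
  have hmem := wedge_bracket_mem (EE r m h1) (EE m s h2) (EE r' s' h') hz1 hz2
  rw [bracket_EE_eq] at hmem
  rw [show wedge (EE r s hrs) (EE r' s' h' : UU n K)
      = - wedge (EE r' s' h') (EE r s (h1.trans h2)) from wedge_anti _ _]
  exact (Imd3 n K).neg_mem hmem

private lemma uLie_apply_zero (x : UU n K) {r s : BIdx n} (h : s.1 ≤ r.1) :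
    (x : Matrix (BIdx n) (BIdx n) K) r s = 0 := by
  obtain ⟨a, i⟩ := r; obtain ⟨b, j⟩ := s
  exact x.2 a b i j h

private lemma eq_sum (x : UU n K) :
    x = ∑ r : BIdx n, ∑ s : BIdx n,
      (if h : r.1 < s.1 then (x : Matrix (BIdx n) (BIdx n) K) r s • EE r s h else 0) := by
  apply Subtype.ext
  rw [AddSubmonoidClass.coe_finset_sum]
  conv_lhs => rw [Matrix.matrix_eq_sum_single (x : Matrix (BIdx n) (BIdx n) K)]
  refine Finset.sum_congr rfl fun r _ => ?_
  rw [AddSubmonoidClass.coe_finset_sum]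
  refine Finset.sum_congr rfl fun s _ => ?_
  by_cases h : r.1 < s.1
  · rw [dif_pos h]
    have hc : (((x : Matrix (BIdx n) (BIdx n) K) r s • EE r s h : UU n K) :
        Matrix (BIdx n) (BIdx n) K)
        = (x : Matrix (BIdx n) (BIdx n) K) r s • Matrix.single r s (1 : K) := rfl
    rw [hc, Matrix.smul_single, smul_eq_mul, mul_one]
  · rw [dif_neg h, uLie_apply_zero x (le_of_not_gt h), Matrix.single_zero,
      ZeroMemClass.coe_zero]

private lemma term_mem {n : Fin 4 → ℕ} {K : Type*} [Field K] (hn1 : 3 ≤ n 1) (x y : UU n K)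
    (hx' : ∀ r s : BIdx n, ¬(r.1 = 0 ∧ s.1 = 3) →
      (x : Matrix (BIdx n) (BIdx n) K) r s = 0)
    (r s r' s' : BIdx n) :
    wedgeLin (if h : r.1 < s.1 then (x : Matrix (BIdx n) (BIdx n) K) r s • EE r s h else 0)
      (if h : r'.1 < s'.1 then (y : Matrix (BIdx n) (BIdx n) K) r' s' • EE r' s' h else 0)
      ∈ Imd3 n K := by
  by_cases h : r.1 < s.1
  · rw [dif_pos h]
    by_cases h' : r'.1 < s'.1
    · rw [dif_pos h']
      by_cases hb : r.1 = 0 ∧ s.1 = 3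
      · rw [map_smul, map_smul, LinearMap.smul_apply]
        refine Submodule.smul_mem _ _ (Submodule.smul_mem _ _ ?_)
        rw [wedgeLin_apply]
        exact core hn1 r s r' s' hb.1 hb.2 h h'
      · rw [hx' r s hb, zero_smul, map_zero, LinearMap.zero_apply]
        exact (Imd3 n K).zero_mem
    · rw [dif_neg h', map_zero]
      exact (Imd3 n K).zero_mem
  · rw [dif_neg h, map_zero, LinearMap.zero_apply]
    exact (Imd3 n K).zero_mem

end Aux

/-- For every `x ∈ 𝔲_{14}` (block `(0,3)`) and every `y ∈ 𝔲`, the element `x ∧ y` of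
`Λ²𝔲` lies in `Im(d3)`. -/
theorem stmt_13 (n : Fin 4 → ℕ) (h0 : 1 ≤ n 0) (h1 : 3 ≤ n 1) (h2 : 3 ≤ n 2)
    (h3 : 1 ≤ n 3) (K : Type*) [Field K] :
    ∀ x y : UU n K, inBlock 0 3 x → wedge x y ∈ Imd3 n K := by
  intro x y hx
  have hx' : ∀ r s : BIdx n, ¬(r.1 = 0 ∧ s.1 = 3) →
      (x : Matrix (BIdx n) (BIdx n) K) r s = 0 := by
    rintro ⟨a, i⟩ ⟨b, j⟩ h
    exact hx a b i j h
  rw [← wedgeLin_apply]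
  rw [eq_sum x, eq_sum y]
  simp only [map_sum, LinearMap.coe_sum, Finset.sum_apply]
  apply Submodule.sum_mem; intro i1 _
  apply Submodule.sum_mem; intro i2 _
  apply Submodule.sum_mem; intro i3 _
  apply Submodule.sum_mem; intro i4 _
  exact term_mem h1 x y hx' _ _ _ _
end

section
/- For all x, y ∈ 𝔲_{13}, the element x ∧ y lies in Im(d3); likewise, for all x, y ∈ 𝔲_{24}, the element x ∧ y lies in Im(d3). -/
attribute [local instance 100] LieRing.ofAssociativeRing

section Aux

set_option maxHeartbeats 1000000
set_option synthInstance.maxHeartbeats 400000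

variable {n : Fin 4 → ℕ} {K : Type*} [Field K]

lemma UU_coe_smul (c : K) (x : UU n K) :
    ((c • x : UU n K) : Matrix (BIdx n) (BIdx n) K) = c • (x : Matrix (BIdx n) (BIdx n) K) := rfl

lemma wedge_coe (x y : UU n K) :
    (wedge x y : ExteriorAlgebra K (UU n K)) =
      ExteriorAlgebra.ι K x * ExteriorAlgebra.ι K y := by
  show ExteriorAlgebra.ιMulti K 2 ![x, y] = _
  simp [ExteriorAlgebra.ιMulti_apply, List.ofFn_succ]

lemma wedge_zero_right (x : UU n K) : wedge x (0 : UU n K) = 0 := by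
  apply Subtype.ext
  simp [wedge_coe]

/-- `wedge x ·` as a linear map. -/
noncomputable def wedgeR (x : UU n K) : UU n K →ₗ[K] ↥(⋀[K]^2 (UU n K)) where
  toFun y := wedge x y
  map_add' y z := Subtype.ext (by simp [wedge_coe, mul_add])
  map_smul' c y := Subtype.ext (by simp [wedge_coe, mul_smul_comm])

/-- The elementary matrix, as an element of `𝔲`. -/
def Eu (a b : Fin 4) (hab : a < b) (i : Fin (n a)) (j : Fin (n b)) : UU n K :=
  ⟨Matrix.single ⟨a, i⟩ ⟨b, j⟩ 1, by
    intro c d i' j' h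
    apply Matrix.single_apply_of_ne
    rintro ⟨h1, h2⟩
    have hc : a = c := congrArg Sigma.fst h1
    have hd : b = d := congrArg Sigma.fst h2
    subst hc; subst hd
    exact absurd hab (not_lt.2 h)⟩

lemma Eu_coe (a b : Fin 4) (hab : a < b) (i : Fin (n a)) (j : Fin (n b)) :
    ((Eu a b hab i j : UU n K) : Matrix (BIdx n) (BIdx n) K)
      = Matrix.single ⟨a, i⟩ ⟨b, j⟩ 1 := rfl

lemma inBlock_Eu (a b : Fin 4) (hab : a < b) (i : Fin (n a)) (j : Fin (n b)) :
    inBlock a b (Eu a b hab i j : UU n K) := by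
  intro c d i' j' h
  apply Matrix.single_apply_of_ne
  rintro ⟨h1, h2⟩
  exact h ⟨(congrArg Sigma.fst h1).symm, (congrArg Sigma.fst h2).symm⟩

lemma mul_eq_zero_of_blocks {a b c d : Fin 4} (x y : UU n K)
    (hx : inBlock a b x) (hy : inBlock c d y) (h : b ≠ c) :
    (x : Matrix (BIdx n) (BIdx n) K) * (y : Matrix (BIdx n) (BIdx n) K) = 0 := by
  ext ⟨p, ii⟩ ⟨q, jj⟩
  rw [Matrix.mul_apply, Matrix.zero_apply]
  apply Finset.sum_eq_zero
  rintro ⟨r, kk⟩ -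
  by_cases hp : p = a ∧ r = b
  · rw [hy r q kk jj (fun hh => h (hp.2.symm.trans hh.1)), mul_zero]
  · rw [hx p r ii kk hp, zero_mul]

lemma lie_eq_zero_of_blocks {a b c d : Fin 4} (x y : UU n K)
    (hx : inBlock a b x) (hy : inBlock c d y) (h1 : b ≠ c) (h2 : d ≠ a) :
    ⁅x, y⁆ = (0 : UU n K) := by
  apply Subtype.ext
  show ⁅(x : Matrix (BIdx n) (BIdx n) K), (y : Matrix (BIdx n) (BIdx n) K)⁆ = 0
  rw [Ring.lie_def, mul_eq_zero_of_blocks x y hx hy h1,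
    mul_eq_zero_of_blocks y x hy hx h2, sub_zero]

lemma lie_Eu {a b c : Fin 4} (hab : a < b) (hbc : b < c)
    (i : Fin (n a)) (k : Fin (n b)) (j : Fin (n c)) :
    ⁅(Eu a b hab i k : UU n K), (Eu b c hbc k j : UU n K)⁆ = Eu a c (hab.trans hbc) i j := by
  apply Subtype.ext
  show ⁅Matrix.single (⟨a, i⟩ : BIdx n) (⟨b, k⟩ : BIdx n) (1 : K),
      Matrix.single (⟨b, k⟩ : BIdx n) (⟨c, j⟩ : BIdx n) (1 : K)⁆
      = Matrix.single (⟨a, i⟩ : BIdx n) (⟨c, j⟩ : BIdx n) (1 : K)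
  have hz : Matrix.single (⟨b, k⟩ : BIdx n) (⟨c, j⟩ : BIdx n) (1 : K) *
      Matrix.single (⟨a, i⟩ : BIdx n) (⟨b, k⟩ : BIdx n) (1 : K) = 0 :=
    Matrix.single_mul_single_of_ne (c := (1 : K)) (⟨b, k⟩ : BIdx n) (⟨c, j⟩ : BIdx n) (⟨a, i⟩ : BIdx n)
      (fun hh => (hab.trans hbc).ne' (congrArg Sigma.fst hh)) 1
  rw [Ring.lie_def, Matrix.single_mul_single_same, hz, sub_zero, one_mul]

lemma block_decomp (a b : Fin 4) (hab : a < b) (Y : UU n K) (hY : inBlock a b Y) :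
    Y = ∑ i : Fin (n a), ∑ j : Fin (n b),
      ((Y : Matrix (BIdx n) (BIdx n) K) ⟨a, i⟩ ⟨b, j⟩) • Eu a b hab i j := by
  apply Subtype.ext
  rw [AddSubmonoidClass.coe_finset_sum]
  ext ⟨p, ii⟩ ⟨q, jj⟩
  rw [Matrix.sum_apply]
  simp only [AddSubmonoidClass.coe_finset_sum, Matrix.sum_apply, UU_coe_smul,
    Matrix.smul_apply, Eu_coe, smul_eq_mul]
  by_cases hpq : p = a ∧ q = b
  · obtain ⟨rfl, rfl⟩ := hpq
    rw [Finset.sum_eq_single ii]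
    · rw [Finset.sum_eq_single jj]
      · rw [Matrix.single_apply_same, mul_one]
      · intro j' _ hj'
        rw [Matrix.single_apply_of_ne, mul_zero]
        rintro ⟨-, h2⟩
        exact hj' (by
          have := (Sigma.mk.inj_iff.1 h2).2
          exact eq_of_heq this)
      · intro hmem; exact absurd (Finset.mem_univ jj) hmem
    · intro i' _ hi'
      apply Finset.sum_eq_zero
      intro j' _
      rw [Matrix.single_apply_of_ne, mul_zero]
      rintro ⟨h1, -⟩
      exact hi' (by
        have := (Sigma.mk.inj_iff.1 h1).2
        exact eq_of_heq this)
    · intro hmem; exact absurd (Finset.mem_univ ii) hmem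
  · rw [hY p q ii jj hpq]
    symm
    apply Finset.sum_eq_zero
    intro i' _
    apply Finset.sum_eq_zero
    intro j' _
    rw [Matrix.single_apply_of_ne, mul_zero]
    rintro ⟨h1, h2⟩
    exact hpq ⟨(congrArg Sigma.fst h1).symm, (congrArg Sigma.fst h2).symm⟩

lemma block_wedge_mem (a b c : Fin 4) (hab : a < b) (hbc : b < c) (hb : 1 ≤ n b)
    (X Y : UU n K) (hX : inBlock a c X) (hY : inBlock a c Y) :
    wedge X Y ∈ Imd3 n K := by
  have hac : a < c := hab.trans hbc
  set k0 : Fin (n b) := ⟨0, hb⟩ with hk0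
  rw [block_decomp a c hac Y hY]
  show wedgeR X _ ∈ Imd3 n K
  rw [map_sum]
  apply Submodule.sum_mem
  intro i _
  rw [map_sum]
  apply Submodule.sum_mem
  intro j _
  rw [map_smul]
  apply Submodule.smul_mem
  show wedge X (Eu a c hac i j) ∈ Imd3 n K
  apply Submodule.subset_span
  refine ⟨Eu a b hab i k0, Eu b c hbc k0 j, X, ?_⟩
  rw [lie_Eu,
    lie_eq_zero_of_blocks X (Eu a b hab i k0) hX (inBlock_Eu a b hab i k0)
      hac.ne' hab.ne',
    lie_eq_zero_of_blocks (Eu b c hbc k0 j) X (inBlock_Eu b c hbc k0 j) hX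
      hac.ne' hbc.ne',
    wedge_zero_right, wedge_zero_right, add_zero, add_zero]

end Aux

/-- For all `x, y ∈ 𝔲_{13}` (block `(0,2)`), `x ∧ y ∈ Im(d3)`; likewise for all
`x, y ∈ 𝔲_{24}` (block `(1,3)`), `x ∧ y ∈ Im(d3)`. -/
theorem stmt_14 (n : Fin 4 → ℕ) (h0 : 1 ≤ n 0) (h1 : 3 ≤ n 1) (h2 : 3 ≤ n 2)
    (h3 : 1 ≤ n 3) (K : Type*) [Field K] :
    (∀ x y : UU n K, inBlock 0 2 x → inBlock 0 2 y → wedge x y ∈ Imd3 n K) ∧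
    (∀ x y : UU n K, inBlock 1 3 x → inBlock 1 3 y → wedge x y ∈ Imd3 n K) := by
  have h01 : (0 : Fin 4) < 1 := by decide
  have h12 : (1 : Fin 4) < 2 := by decide
  have h23 : (2 : Fin 4) < 3 := by decide
  constructor
  · intro x y hx hy
    exact block_wedge_mem 0 1 2 h01 h12 (le_trans (by norm_num) h1) x y hx hy
  · intro x y hx hy
    exact block_wedge_mem 1 2 3 h12 h23 (le_trans (by norm_num) h2) x y hx hy
end
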